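/- Fix an integer N ≥ 3 and define sequences x_k, z_k for 1 ≤ k ≤ N-1 by x_1 = z_1 = 1 and, for k ≤ ⌊N/2⌋ + 1: x_k = ((N-k+1)/2)·x_{k-1} + z_{k-1} and z_k = x_k - ((k-1)/2)·x_{k-1}; for k ≥ ⌊N/2⌋ + 2: x_k = ((k-1)/(2k-N))·(x_{k-1} + z_{k-1}) and z_k = 0. Then for all 1 ≤ k ≤ N-1 the sequence x_k is strictly positive and non-decreasing in k, and 0 ≤ z_k ≤ x_k for all 1 ≤ k ≤ N-2. -/
import Mathlib


/-- Positivity and monotonicity of the multiplicities `x_k`, and bounds `0 ≤ z_k ≤ x_k`,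
for the recursive PIR scheme over `K_N`. -/
theorem xk_pos_mono_zk_bounds (N : ℕ) (hN : 3 ≤ N) (x z : ℕ → ℚ)
    (hx1 : x 1 = 1) (hz1 : z 1 = 1)
    (hxlow : ∀ k, 2 ≤ k → k ≤ N / 2 + 1 →
      x k = (((N : ℚ) - k + 1) / 2) * x (k - 1) + z (k - 1))
    (hzlow : ∀ k, 2 ≤ k → k ≤ N / 2 + 1 →
      z k = x k - (((k : ℚ) - 1) / 2) * x (k - 1))
    (hxhigh : ∀ k, N / 2 + 2 ≤ k → k ≤ N - 1 →
      x k = (((k : ℚ) - 1) / (2 * (k : ℚ) - N)) * (x (k - 1) + z (k - 1)))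
    (hzhigh : ∀ k, N / 2 + 2 ≤ k → k ≤ N - 1 → z k = 0) :
    (∀ k, 1 ≤ k → k ≤ N - 1 → 0 < x k) ∧
    (∀ k, 2 ≤ k → k ≤ N - 1 → x (k - 1) ≤ x k) ∧
    (∀ k, 1 ≤ k → k ≤ N - 2 → 0 ≤ z k ∧ z k ≤ x k) := by
  have main : ∀ k, 1 ≤ k → k ≤ N - 1 →
      0 < x k ∧ 0 ≤ z k ∧ z k ≤ x k ∧ (2 ≤ k → x (k - 1) ≤ x k) := by
    intro k hk1
    induction k, hk1 using Nat.le_induction with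
    | base =>
      intro _
      refine ⟨by rw [hx1]; norm_num, by rw [hz1]; norm_num,
        by rw [hx1, hz1], fun h => absurd h (by omega)⟩
    | succ k hk ih =>
      intro hkN
      obtain ⟨hxp, hz0, hzx, _⟩ := ih (by omega)
      have hk1 : (1 : ℚ) ≤ (k : ℚ) := by exact_mod_cast hk
      rcases le_or_gt (k + 1) (N / 2 + 1) with hlow | hhigh
      · -- low regime
        have h2k : 2 * k ≤ N := by omega
        have h2k' : 2 * (k : ℚ) ≤ (N : ℚ) := by exact_mod_cast h2k
        have hk2 : k + 2 ≤ N := by omega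
        have hk2' : (k : ℚ) + 2 ≤ (N : ℚ) := by exact_mod_cast hk2
        have hxk := hxlow (k + 1) (by omega) hlow
        have hzk := hzlow (k + 1) (by omega) hlow
        simp only [Nat.add_sub_cancel] at hxk hzk
        push_cast at hxk hzk
        refine ⟨?_, ?_, ?_, ?_⟩
        · rw [hxk]; nlinarith
        · rw [hzk, hxk]; nlinarith
        · rw [hzk]; nlinarith
        · intro _
          simp only [Nat.add_sub_cancel]
          rw [hxk]; nlinarith
      · -- high regime
        have hd : (0 : ℚ) < 2 * ((k : ℚ) + 1) - N := by
          have : N + 1 ≤ 2 * (k + 1) := by omega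
          have := (Nat.cast_le (α := ℚ)).mpr this
          push_cast at this; linarith
        have hnum : 2 * ((k : ℚ) + 1) - N ≤ (k : ℚ) := by
          have : k + 2 ≤ N := by omega
          have := (Nat.cast_le (α := ℚ)).mpr this
          push_cast at this; linarith
        have hxk := hxhigh (k + 1) (by omega) hkN
        have hzk := hzhigh (k + 1) (by omega) hkN
        simp only [Nat.add_sub_cancel] at hxk
        push_cast at hxk
        have hcoef : (1 : ℚ) ≤ ((k : ℚ) + 1 - 1) / (2 * ((k : ℚ) + 1) - N) := by
          rw [one_le_div hd]; linarith
        have hsum : 0 < x k + z k := by linarith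
        have hxk1 : x k + z k ≤ x (k + 1) := by
          rw [hxk]; nlinarith
        refine ⟨by linarith, by rw [hzk], by rw [hzk]; linarith, ?_⟩
        intro _
        simp only [Nat.add_sub_cancel]
        linarith
  refine ⟨fun k h1 h2 => (main k h1 h2).1, fun k h2 hk => (main k (by omega) hk).2.2.2 h2,
    fun k h1 h2 => ⟨(main k h1 (by omega)).2.1, (main k h1 (by omega)).2.2.1⟩⟩
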